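/- Let f : [0,1] → [0,1] be continuous and periodically dense. Then F_f on C([0,1],[0,1]) with the compact-open topology has no dense orbit: for every g ∈ C([0,1],[0,1]) the orbit {f^n ∘ g : n ∈ ℕ} is not dense. -/

import Mathlib

set_option maxHeartbeats 1600000 in
theorem stmt13 (f : C(unitInterval, unitInterval))
    (hper : Dense {x : unitInterval | ∃ k ≥ 1, (⇑f)^[k] x = x}) :
    ∀ g : C(unitInterval, unitInterval),
      ¬ Dense (Set.range fun n : ℕ =>
        (fun h : C(unitInterval, unitInterval) => f.comp h)^[n] g) := by
  intro g hd
  set F : C(unitInterval, unitInterval) → C(unitInterval, unitInterval) :=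
    fun h => f.comp h with hF
  have Fit : ∀ (n : ℕ) (x : unitInterval), (F^[n] g) x = (⇑f)^[n] (g x) := by
    intro n
    induction n with
    | zero => intro x; simp
    | succ n ih =>
      intro x
      rw [Function.iterate_succ_apply', Function.iterate_succ_apply']
      rw [← ih]; simp [hF]
  -- Step 1: approximate the identity within 1/8
  obtain ⟨_, ⟨n, rfl⟩, hn⟩ :=
    hd.exists_dist_lt (ContinuousMap.id unitInterval) (by norm_num : (0:ℝ) < 1/8)
  have hnpt : ∀ x : unitInterval, |((F^[n] g) x).1 - x.1| < 1/8 := by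
    intro x
    have h1 := ContinuousMap.dist_apply_le_dist (f := ContinuousMap.id unitInterval)
      (g := F^[n] g) x
    have : dist (x : unitInterval) ((F^[n] g) x) < 1/8 := lt_of_le_of_lt h1 hn
    rw [Subtype.dist_eq, Real.dist_eq] at this
    rw [abs_sub_comm]
    exact this
  -- Step 2: constants
  set ε : ℝ := 1 / (16 * (n + 1)) with hε
  have hεpos : 0 < ε := by positivity
  have hεle : ε ≤ 1 / 16 := by
    rw [hε]
    rw [div_le_div_iff₀ (by positivity) (by norm_num)]
    nlinarith [Nat.cast_nonneg (α := ℝ) n]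
  set c : Fin (n + 2) → ℝ := fun i => 1/4 + (i : ℝ) / (2 * (n + 1)) with hc
  have hcmem : ∀ i : Fin (n+2), c i ∈ unitInterval := by
    intro i
    have hi : (i : ℝ) ≤ (n : ℝ) + 1 := by
      have := i.2
      have : (i : ℝ) < (n : ℝ) + 2 := by exact_mod_cast Nat.cast_lt.mpr this
      have hint : (i : ℕ) ≤ n + 1 := Nat.lt_succ_iff.mp i.2
      exact_mod_cast hint
    constructor
    · have : 0 ≤ (i : ℝ) / (2 * (n + 1)) := by positivity
      simp only [hc]; linarith
    · have h2 : (i : ℝ) / (2 * (n + 1)) ≤ 1 / 2 := by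
        rw [div_le_div_iff₀ (by positivity) (by norm_num)]
        nlinarith
      simp only [hc]; linarith
  have hclb : ∀ i : Fin (n+2), 1/4 ≤ c i := by
    intro i
    have : 0 ≤ (i : ℝ) / (2 * (n + 1)) := by positivity
    simp only [hc]; linarith
  have hcub : ∀ i : Fin (n+2), c i ≤ 3/4 := by
    intro i
    have hi : (i : ℕ) ≤ n + 1 := Nat.lt_succ_iff.mp i.2
    have hi' : (i : ℝ) ≤ (n : ℝ) + 1 := by exact_mod_cast hi
    have h2 : (i : ℝ) / (2 * (n + 1)) ≤ 1 / 2 := by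
      rw [div_le_div_iff₀ (by positivity) (by norm_num)]
      nlinarith
    simp only [hc]; linarith
  set ci : Fin (n+2) → unitInterval := fun i => ⟨c i, hcmem i⟩ with hci
  have key : ∀ i : Fin (n+2), ∃ m : ℕ, ∀ x : unitInterval,
      dist ((F^[m] g) x) (ci i) < ε := by
    intro i
    obtain ⟨_, ⟨m, rfl⟩, hm⟩ :=
      hd.exists_dist_lt (ContinuousMap.const unitInterval (ci i)) hεpos
    refine ⟨m, fun x => ?_⟩
    have h1 := ContinuousMap.dist_apply_le_dist (f := F^[m] g)
      (g := ContinuousMap.const unitInterval (ci i)) x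
    rw [dist_comm] at hm
    exact lt_of_le_of_lt (by simpa using h1) hm
  choose m hm using key
  -- the m i are pairwise distinct
  have minj : Function.Injective m := by
    intro i i' hmi
    by_contra hne
    have h1 := hm i (0 : unitInterval)
    have h2 := hm i' (0 : unitInterval)
    rw [hmi] at h1
    have hd12 : dist (ci i) (ci i') < 2 * ε :=
      calc dist (ci i) (ci i') ≤ dist (ci i) ((F^[m i'] g) 0) + dist ((F^[m i'] g) 0) (ci i') :=
            dist_triangle _ _ _
        _ < ε + ε := add_lt_add (by rw [dist_comm]; exact h1) h2
        _ = 2 * ε := by ring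
    rw [Subtype.dist_eq, Real.dist_eq] at hd12
    have hsub : c i - c i' = ((i : ℝ) - (i' : ℝ)) / (2 * (n + 1)) := by
      simp only [hc]; ring
    have hge : (1 : ℝ) ≤ |(i : ℝ) - (i' : ℝ)| := by
      have : (i : ℕ) ≠ (i' : ℕ) := fun h => hne (Fin.ext h)
      have h1 : ((i : ℕ) : ℝ) - ((i' : ℕ) : ℝ) ≠ 0 := by
        intro h; exact this (by exact_mod_cast sub_eq_zero.mp h)
      have : (1 : ℝ) ≤ |((i : ℕ) : ℝ) - ((i' : ℕ) : ℝ)| := by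
        rcases lt_or_gt_of_ne h1 with h | h
        · rw [abs_of_neg h]
          have : ((i : ℕ) : ℝ) + 1 ≤ ((i' : ℕ) : ℝ) := by
            exact_mod_cast Nat.succ_le_of_lt (by exact_mod_cast (by linarith : ((i:ℕ):ℝ) < ((i':ℕ):ℝ)))
          linarith
        · rw [abs_of_pos h]
          have : ((i' : ℕ) : ℝ) + 1 ≤ ((i : ℕ) : ℝ) := by
            exact_mod_cast Nat.succ_le_of_lt (by exact_mod_cast (by linarith : ((i':ℕ):ℝ) < ((i:ℕ):ℝ)))
          linarith
      exact_mod_cast this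
    have habs : |c i - c i'| = |(i : ℝ) - (i' : ℝ)| / (2 * (n + 1)) := by
      rw [hsub, abs_div, abs_of_pos (by positivity : (0:ℝ) < 2 * ((n:ℝ) + 1))]
    have hlow : 1 / (2 * ((n : ℝ) + 1)) ≤ |c i - c i'| := by
      rw [habs]
      gcongr
    have : 2 * ε < 1 / (2 * ((n : ℝ) + 1)) := by
      rw [hε, show (2:ℝ) * (1 / (16 * ((n:ℝ) + 1))) = 1 / (8 * ((n:ℝ) + 1)) by
        field_simp; ring]
      exact one_div_lt_one_div_of_lt (by positivity)
        (by nlinarith [Nat.cast_nonneg (α := ℝ) n])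
    linarith [abs_nonneg (c i - c i')]
  -- some m i exceeds n
  have hex : ∃ i : Fin (n+2), n < m i := by
    by_contra h
    push_neg at h
    have hinj2 : Function.Injective (fun i : Fin (n+2) => (⟨m i, Nat.lt_succ_of_le (h i)⟩ : Fin (n+1))) := by
      intro a b hab
      exact minj (by simpa using congrArg Fin.val hab)
    have := Fintype.card_le_of_injective _ hinj2
    simp [Fintype.card_fin] at this
  obtain ⟨i, hi⟩ := hex
  set j : ℕ := m i - n with hj
  have hjn : j + n = m i := Nat.sub_add_cancel hi.le
  -- IVT surjectivity
  have surj : ∀ y : unitInterval, 1/8 ≤ y.1 → y.1 ≤ 7/8 → ∃ x, (F^[n] g) x = y := by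
    intro y hy1 hy2
    set φ : unitInterval → ℝ := fun x => ((F^[n] g) x).1 with hφ
    have hφc : Continuous φ := continuous_subtype_val.comp (F^[n] g).continuous
    have hiv := intermediate_value_univ (0 : unitInterval) (1 : unitInterval) hφc
    have h0 : φ 0 < 1/8 := by
      have := hnpt 0
      simp only [Set.Icc.coe_zero] at this
      have := abs_lt.mp this
      simp only [hφ]; linarith [this.2]
    have h1 : 7/8 < φ 1 := by
      have := hnpt 1
      simp only [Set.Icc.coe_one] at this
      have := abs_lt.mp this
      simp only [hφ]; linarith [this.1]
    have hmem : y.1 ∈ Set.Icc (φ 0) (φ 1) := ⟨by linarith, by linarith⟩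
    obtain ⟨x, hx⟩ := hiv hmem
    exact ⟨x, Subtype.ext hx⟩
  -- key contraction step
  have step : ∀ y : unitInterval, 1/8 ≤ y.1 → y.1 ≤ 7/8 →
      3/16 ≤ ((⇑f)^[j] y).1 ∧ ((⇑f)^[j] y).1 ≤ 13/16 := by
    intro y hy1 hy2
    obtain ⟨x, hx⟩ := surj y hy1 hy2
    have heq : (⇑f)^[j] y = (F^[m i] g) x := by
      rw [← hx, Fit n x, ← Function.iterate_add_apply, hjn, Fit (m i) x]
    have hdist := hm i x
    rw [← heq] at hdist
    rw [Subtype.dist_eq, Real.dist_eq] at hdist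
    have habs := abs_lt.mp hdist
    have hciv : (ci i).1 = c i := rfl
    rw [hciv] at habs
    have hlb := hclb i
    have hub := hcub i
    obtain ⟨hA, hB⟩ := habs
    have hV1 : c i - ε < ((⇑f)^[j] y).1 := by
      first
      | linarith [hA]
      | (clear_value ε c ci j; linarith [hA])
      | nlinarith [hA]
    have hV2 : ((⇑f)^[j] y).1 < c i + ε := by
      first
      | linarith [hB]
      | (clear_value ε c ci j; linarith [hB])
      | nlinarith [hB]
    constructor
    · first
      | linarith [hV1, hεle, hclb i]
      | (clear_value ε c ci j; linarith [hV1, hεle, hclb i])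
    · first
      | linarith [hV2, hεle, hcub i]
      | (clear_value ε c ci j; linarith [hV2, hεle, hcub i])
  -- get a periodic point in (1/8, 3/16)
  have hU : IsOpen {y : unitInterval | 1/8 < y.1 ∧ y.1 < 3/16} := by
    have : {y : unitInterval | 1/8 < y.1 ∧ y.1 < 3/16}
        = Subtype.val ⁻¹' (Set.Ioo (1/8 : ℝ) (3/16)) := rfl
    rw [this]
    exact (isOpen_Ioo).preimage continuous_subtype_val
  have hUne : {y : unitInterval | 1/8 < y.1 ∧ y.1 < 3/16}.Nonempty := by
    refine ⟨⟨5/32, by constructor <;> norm_num⟩, by constructor <;> norm_num⟩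
  obtain ⟨p, hpper, hp1, hp2⟩ := hper.exists_mem_open hU hUne
  obtain ⟨k, hk1, hkfix⟩ := hpper
  -- iterate bounds
  have hj1 : 1 ≤ j := by
    rw [hj]; omega
  have iter : ∀ t : ℕ, 3/16 ≤ ((⇑f)^[j * (t+1)] p).1 ∧ ((⇑f)^[j * (t+1)] p).1 ≤ 13/16 := by
    intro t
    induction t with
    | zero =>
      have h := step p hp1.le (by linarith)
      simpa using h
    | succ t ih =>
      have heq : j * (t + 1 + 1) = j + j * (t + 1) := by ring
      rw [heq, Function.iterate_add_apply]
      exact step _ (by linarith [ih.1]) (by linarith [ih.2])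
  -- contradiction with periodicity
  have hfix : (⇑f)^[j * k] p = p := by
    have : (⇑f)^[k * j] p = ((⇑f)^[k])^[j] p := by rw [Function.iterate_mul]
    rw [mul_comm, this, Function.iterate_fixed hkfix]
  have := iter (k - 1)
  rw [(by omega : k - 1 + 1 = k), hfix] at this
  linarith [this.1, hp2]
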